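/- Let Ω : ℝ → M_n(ℂ) be continuously differentiable. Then t ↦ exp(Ω(t)) is differentiable and exp(−Ω(t)) · (d/dt exp(Ω(t))) = ∫₀¹ exp(−sΩ(t)) · Ω′(t) · exp(sΩ(t)) ds for every t. -/

import Mathlib

open Matrix MeasureTheory intervalIntegral

attribute [local instance] Matrix.linftyOpNormedAddCommGroup Matrix.linftyOpNormedRing
  Matrix.linftyOpNormedAlgebra

section Aux

open NormedSpace Asymptotics Filter

variable {𝔸 : Type*} [NormedRing 𝔸] [NormedAlgebra ℝ 𝔸] [CompleteSpace 𝔸]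

lemma exp_cont' : Continuous (exp : 𝔸 → 𝔸) :=
  continuous_iff_continuousAt.2 fun x => (exp_analytic (𝕂 := ℝ) x).continuousAt

lemma duhamel_cont (Ω : ℝ → 𝔸) (hΩ : Continuous Ω) (B C : 𝔸) :
    Continuous (fun s : ℝ => exp (s • Ω s) * B * exp ((1 - s) • C)) := by
  exact ((exp_cont'.comp (continuous_id.smul hΩ)).mul continuous_const).mul
    (exp_cont'.comp ((continuous_const.sub continuous_id).smul continuous_const))

lemma duhamel_key (A B : 𝔸) :
    exp (A + B) = exp A +
      ∫ s in (0:ℝ)..1, exp (s • (A + B)) * B * exp ((1 - s) • A) := by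
  have hder : ∀ s : ℝ, HasDerivAt (fun u : ℝ => exp (u • (A + B)) * exp ((1 - u) • A))
      (exp (s • (A + B)) * B * exp ((1 - s) • A)) s := by
    intro s
    have h1 : HasDerivAt (fun u : ℝ => exp (u • (A + B)))
        (exp (s • (A + B)) * (A + B)) s := hasDerivAt_exp_smul_const (A + B) s
    have hlin : HasDerivAt (fun u : ℝ => 1 - u) (-1 : ℝ) s := by
      simpa using (hasDerivAt_id s).const_sub 1
    have h2 : HasDerivAt (fun u : ℝ => exp ((1 - u) • A))
        ((-1 : ℝ) • (exp ((1 - s) • A) * A)) s :=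
      by exact
        HasDerivAt.scomp_of_eq (hg := hasDerivAt_exp_smul_const A (1 - s)) (hh := hlin) (hy := rfl)
    have h3 := h1.mul h2
    have hc : A * exp ((1 - s) • A) = exp ((1 - s) • A) * A :=
      (((Commute.refl A).smul_right ((1:ℝ) - s)).exp_right).eq
    convert h3 using 1
    · rfl
    rw [neg_one_smul, mul_neg, ← hc]
    noncomm_ring
  have hcont : Continuous (fun s : ℝ => exp (s • (A + B)) * B * exp ((1 - s) • A)) :=
    duhamel_cont (fun _ => A + B) continuous_const B A
  have hFTC := intervalIntegral.integral_eq_sub_of_hasDerivAt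
    (f := fun u : ℝ => exp (u • (A + B)) * exp ((1 - u) • A))
    (fun s _ => hder s) (hcont.intervalIntegrable 0 1)
  rw [hFTC]
  simp [NormedSpace.exp_zero]

lemma duhamel_hasDerivAt (Ω : ℝ → 𝔸) (hc : Continuous Ω) {A' : 𝔸} {t : ℝ}
    (hd : HasDerivAt Ω A' t) :
    HasDerivAt (fun x => exp (Ω x))
      (∫ s in (0:ℝ)..1, exp (s • Ω t) * A' * exp ((1 - s) • Ω t)) t := by
  set A := Ω t with hA
  obtain ⟨M, hM⟩ := ((isCompact_Icc (a := (0:ℝ)) (b := 1)).prod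
      (isCompact_Icc (a := t - 1) (b := t + 1))).exists_bound_of_continuousOn
      (f := fun p : ℝ × ℝ => exp (p.1 • Ω p.2))
      ((exp_cont'.comp (continuous_fst.smul (hc.comp continuous_snd))).continuousOn)
  have hMb : ∀ u ∈ Set.Icc (0:ℝ) 1, ∀ x ∈ Set.Icc (t - 1) (t + 1),
      ‖exp (u • Ω x)‖ ≤ M := fun u hu x hx => hM (u, x) ⟨hu, hx⟩
  have ht : t ∈ Set.Icc (t - 1) (t + 1) := ⟨by linarith, by linarith⟩
  have hM0 : (0:ℝ) ≤ M :=
    le_trans (norm_nonneg _) (hMb 0 ⟨le_rfl, zero_le_one⟩ t ht)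
  -- Step (i): a Lipschitz-type bound on `exp (s • Ω x) - exp (s • A)`
  have hi : ∀ x ∈ Set.Icc (t - 1) (t + 1), ∀ s ∈ Set.Icc (0:ℝ) 1,
      ‖exp (s • Ω x) - exp (s • A)‖ ≤ M * M * ‖Ω x - A‖ := by
    intro x hx s hs
    have e : s • A + s • (Ω x - A) = s • Ω x := by
      rw [← smul_add]; congr 1; abel
    have key := duhamel_key (s • A) (s • (Ω x - A))
    rw [e] at key
    rw [key, add_sub_cancel_left]
    have hb : ∀ u ∈ Set.uIoc (0:ℝ) 1,
        ‖exp (u • (s • Ω x)) * (s • (Ω x - A)) * exp ((1 - u) • (s • A))‖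
          ≤ M * M * ‖Ω x - A‖ := by
      intro u hu
      rw [Set.uIoc_of_le zero_le_one] at hu
      have hu0 : 0 ≤ u := le_of_lt hu.1
      have hu1 : u ≤ 1 := hu.2
      have h1 : ‖exp (u • (s • Ω x))‖ ≤ M := by
        rw [smul_smul]
        exact hMb _ ⟨mul_nonneg hu0 hs.1, mul_le_one₀ hu1 hs.1 hs.2⟩ x hx
      have h2 : ‖exp ((1 - u) • (s • A))‖ ≤ M := by
        rw [smul_smul, hA]
        exact hMb _ ⟨mul_nonneg (by linarith) hs.1,
          mul_le_one₀ (by linarith) hs.1 hs.2⟩ t ht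
      have h3 : ‖s • (Ω x - A)‖ ≤ ‖Ω x - A‖ := by
        rw [norm_smul, Real.norm_eq_abs, abs_of_nonneg hs.1]
        exact mul_le_of_le_one_left (norm_nonneg _) hs.2
      calc ‖exp (u • (s • Ω x)) * (s • (Ω x - A)) * exp ((1 - u) • (s • A))‖
          ≤ ‖exp (u • (s • Ω x)) * (s • (Ω x - A))‖ * ‖exp ((1 - u) • (s • A))‖ :=
            norm_mul_le _ _
        _ ≤ (‖exp (u • (s • Ω x))‖ * ‖s • (Ω x - A)‖) * ‖exp ((1 - u) • (s • A))‖ := by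
            gcongr; exact norm_mul_le _ _
        _ ≤ (M * ‖Ω x - A‖) * M :=
            mul_le_mul (mul_le_mul h1 h3 (norm_nonneg _) hM0) h2 (norm_nonneg _)
              (mul_nonneg hM0 (norm_nonneg _))
        _ = M * M * ‖Ω x - A‖ := by ring
    have := intervalIntegral.norm_integral_le_of_norm_le_const hb
    simpa using this
  -- the candidate derivative
  set D := ∫ s in (0:ℝ)..1, exp (s • A) * A' * exp ((1 - s) • A) with hD
  rw [hasDerivAt_iff_isLittleO]
  set E₁ : ℝ → 𝔸 := fun x => ∫ s in (0:ℝ)..1,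
      exp (s • Ω x) * (Ω x - A - (x - t) • A') * exp ((1 - s) • A) with hE₁
  set E₂ : ℝ → 𝔸 := fun x => ∫ s in (0:ℝ)..1,
      (exp (s • Ω x) - exp (s • A)) * ((x - t) • A') * exp ((1 - s) • A) with hE₂
  have hconst : ∀ (P B : 𝔸), Continuous
      (fun s : ℝ => exp (s • P) * B * exp ((1 - s) • A)) := fun P B =>
    duhamel_cont (fun _ => P) continuous_const B A
  have hcdiff : ∀ (P B : 𝔸), Continuous
      (fun s : ℝ => (exp (s • P) - exp (s • A)) * B * exp ((1 - s) • A)) := by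
    intro P B
    exact (((exp_cont'.comp (continuous_id.smul continuous_const)).sub
        (exp_cont'.comp (continuous_id.smul continuous_const))).mul continuous_const).mul
      (exp_cont'.comp ((continuous_const.sub continuous_id).smul continuous_const))
  have ring_id : ∀ (P Q X B c : 𝔸),
      P * (B - c) * X + (P - Q) * c * X = P * B * X - Q * c * X := by
    intros; noncomm_ring
  -- decomposition of the error
  have heq : ∀ x : ℝ, exp (Ω x) - exp A - (x - t) • D = E₁ x + E₂ x := by
    intro x
    have e : A + (Ω x - A) = Ω x := by abel
    have key := duhamel_key A (Ω x - A)
    rw [e] at key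
    have hsm : ∫ s in (0:ℝ)..1, exp (s • A) * ((x - t) • A') * exp ((1 - s) • A)
        = (x - t) • D := by
      rw [hD, ← intervalIntegral.integral_smul]
      simp only [mul_smul_comm, smul_mul_assoc]
    have h1 := (hconst (Ω x) (Ω x - A)).intervalIntegrable (μ := volume) 0 1
    have h2 := (hconst A ((x - t) • A')).intervalIntegrable (μ := volume) 0 1
    have h3 := (hconst (Ω x) (Ω x - A - (x - t) • A')).intervalIntegrable (μ := volume) 0 1
    have h4 := (hcdiff (Ω x) ((x - t) • A')).intervalIntegrable (μ := volume) 0 1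
    calc exp (Ω x) - exp A - (x - t) • D
        = (∫ s in (0:ℝ)..1, exp (s • Ω x) * (Ω x - A) * exp ((1 - s) • A)) -
          ∫ s in (0:ℝ)..1, exp (s • A) * ((x - t) • A') * exp ((1 - s) • A) := by
          rw [key, hsm]; abel
      _ = ∫ s in (0:ℝ)..1, (exp (s • Ω x) * (Ω x - A) * exp ((1 - s) • A) -
          exp (s • A) * ((x - t) • A') * exp ((1 - s) • A)) :=
          (intervalIntegral.integral_sub h1 h2).symm
      _ = ∫ s in (0:ℝ)..1,
          (exp (s • Ω x) * (Ω x - A - (x - t) • A') * exp ((1 - s) • A) +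
           (exp (s • Ω x) - exp (s • A)) * ((x - t) • A') * exp ((1 - s) • A)) := by
          refine intervalIntegral.integral_congr fun s _ => ?_
          exact (ring_id _ _ _ _ _).symm
      _ = E₁ x + E₂ x := by rw [intervalIntegral.integral_add h3 h4, hE₁, hE₂]
  -- norm bounds for the two error terms
  have hE1b : ∀ x ∈ Set.Icc (t - 1) (t + 1),
      ‖E₁ x‖ ≤ M * M * ‖Ω x - A - (x - t) • A'‖ := by
    intro x hx
    have hb : ∀ s ∈ Set.uIoc (0:ℝ) 1,
        ‖exp (s • Ω x) * (Ω x - A - (x - t) • A') * exp ((1 - s) • A)‖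
          ≤ M * (M * ‖Ω x - A - (x - t) • A'‖) := by
      intro s hs
      rw [Set.uIoc_of_le zero_le_one] at hs
      have hsi : s ∈ Set.Icc (0:ℝ) 1 := ⟨le_of_lt hs.1, hs.2⟩
      have g1 : ‖exp (s • Ω x)‖ ≤ M := hMb s hsi x hx
      have g2 : ‖exp ((1 - s) • A)‖ ≤ M := by
        rw [hA]; exact hMb (1 - s) ⟨by linarith [hsi.2], by linarith [hsi.1]⟩ t ht
      calc ‖exp (s • Ω x) * (Ω x - A - (x - t) • A') * exp ((1 - s) • A)‖
          ≤ ‖exp (s • Ω x) * (Ω x - A - (x - t) • A')‖ * ‖exp ((1 - s) • A)‖ :=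
            norm_mul_le _ _
        _ ≤ (‖exp (s • Ω x)‖ * ‖Ω x - A - (x - t) • A'‖) * ‖exp ((1 - s) • A)‖ := by
            gcongr; exact norm_mul_le _ _
        _ ≤ (M * ‖Ω x - A - (x - t) • A'‖) * M :=
            mul_le_mul (mul_le_mul g1 le_rfl (norm_nonneg _) hM0) g2 (norm_nonneg _)
              (mul_nonneg hM0 (norm_nonneg _))
        _ = M * (M * ‖Ω x - A - (x - t) • A'‖) := by ring
    have := intervalIntegral.norm_integral_le_of_norm_le_const hb
    rw [hE₁]
    calc ‖∫ s in (0:ℝ)..1, exp (s • Ω x) * (Ω x - A - (x - t) • A') * exp ((1 - s) • A)‖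
        ≤ M * (M * ‖Ω x - A - (x - t) • A'‖) * |1 - 0| := this
      _ = M * M * ‖Ω x - A - (x - t) • A'‖ := by norm_num; ring
  have hE2b : ∀ x ∈ Set.Icc (t - 1) (t + 1),
      ‖E₂ x‖ ≤ M * M * ‖Ω x - A‖ * (‖A'‖ * M) * ‖x - t‖ := by
    intro x hx
    have hb : ∀ s ∈ Set.uIoc (0:ℝ) 1,
        ‖(exp (s • Ω x) - exp (s • A)) * ((x - t) • A') * exp ((1 - s) • A)‖
          ≤ M * M * ‖Ω x - A‖ * (‖A'‖ * M) * ‖x - t‖ := by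
      intro s hs
      rw [Set.uIoc_of_le zero_le_one] at hs
      have hsi : s ∈ Set.Icc (0:ℝ) 1 := ⟨le_of_lt hs.1, hs.2⟩
      have g1 : ‖exp (s • Ω x) - exp (s • A)‖ ≤ M * M * ‖Ω x - A‖ := hi x hx s hsi
      have g2 : ‖exp ((1 - s) • A)‖ ≤ M := by
        rw [hA]; exact hMb (1 - s) ⟨by linarith [hsi.2], by linarith [hsi.1]⟩ t ht
      have g3 : ‖(x - t) • A'‖ = ‖x - t‖ * ‖A'‖ := norm_smul _ _
      calc ‖(exp (s • Ω x) - exp (s • A)) * ((x - t) • A') * exp ((1 - s) • A)‖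
          ≤ ‖(exp (s • Ω x) - exp (s • A)) * ((x - t) • A')‖ * ‖exp ((1 - s) • A)‖ :=
            norm_mul_le _ _
        _ ≤ (‖exp (s • Ω x) - exp (s • A)‖ * ‖(x - t) • A'‖) * ‖exp ((1 - s) • A)‖ := by
            gcongr; exact norm_mul_le _ _
        _ ≤ ((M * M * ‖Ω x - A‖) * (‖x - t‖ * ‖A'‖)) * M := by
            rw [g3]
            exact mul_le_mul (mul_le_mul g1 le_rfl
              (mul_nonneg (norm_nonneg _) (norm_nonneg _))
              (by positivity)) g2 (norm_nonneg _) (by positivity)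
        _ = M * M * ‖Ω x - A‖ * (‖A'‖ * M) * ‖x - t‖ := by ring
    have := intervalIntegral.norm_integral_le_of_norm_le_const hb
    rw [hE₂]
    calc ‖∫ s in (0:ℝ)..1,
          (exp (s • Ω x) - exp (s • A)) * ((x - t) • A') * exp ((1 - s) • A)‖
        ≤ M * M * ‖Ω x - A‖ * (‖A'‖ * M) * ‖x - t‖ * |1 - 0| := this
      _ = M * M * ‖Ω x - A‖ * (‖A'‖ * M) * ‖x - t‖ := by norm_num
  -- assemble the little-o estimate
  have hIcc : Set.Icc (t - 1) (t + 1) ∈ nhds t :=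
    Icc_mem_nhds (by linarith) (by linarith)
  have hlo : (fun x => Ω x - A - (x - t) • A') =o[nhds t] fun x => x - t :=
    hasDerivAt_iff_isLittleO.mp hd
  have ho₁ : E₁ =o[nhds t] fun x => x - t := by
    refine (Asymptotics.IsBigO.of_bound (M * M) ?_).trans_isLittleO hlo
    filter_upwards [hIcc] with x hx
    calc ‖E₁ x‖ ≤ M * M * ‖Ω x - A - (x - t) • A'‖ := hE1b x hx
      _ = M * M * ‖Ω x - A - (x - t) • A'‖ := rfl
  have ho₂ : E₂ =o[nhds t] fun x => x - t := by
    obtain ⟨C, hC⟩ := hd.hasFDerivAt.isBigO_sub.bound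
    have h1 : (fun x : ℝ => x - t) =o[nhds t] (fun _ => (1:ℝ)) := by
      rw [Asymptotics.isLittleO_one_iff]
      have h2 : Tendsto (fun x : ℝ => x - t) (nhds t) (nhds (t - t)) :=
        (continuous_id.sub continuous_const).tendsto t
      simpa using h2
    have hsq : (fun x : ℝ => (x - t) * (x - t)) =o[nhds t] fun x => x - t := by
      simpa using (Asymptotics.isBigO_refl (fun x : ℝ => x - t) (nhds t)).mul_isLittleO h1
    refine (Asymptotics.IsBigO.of_bound (M * M * C * (‖A'‖ * M)) ?_).trans_isLittleO hsq
    filter_upwards [hIcc, hC] with x hx hCx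
    have hxt : (0:ℝ) ≤ ‖x - t‖ := norm_nonneg _
    calc ‖E₂ x‖ ≤ M * M * ‖Ω x - A‖ * (‖A'‖ * M) * ‖x - t‖ := hE2b x hx
      _ ≤ M * M * (C * ‖x - t‖) * (‖A'‖ * M) * ‖x - t‖ := by
          have : ‖Ω x - A‖ ≤ C * ‖x - t‖ := hCx
          gcongr
      _ = M * M * C * (‖A'‖ * M) * (‖x - t‖ * ‖x - t‖) := by ring
      _ = M * M * C * (‖A'‖ * M) * ‖(x - t) * (x - t)‖ := by
          rw [norm_mul]
  have hfin : (fun x => exp (Ω x) - exp A - (x - t) • D) = fun x => E₁ x + E₂ x :=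
    funext heq
  rw [hfin]
  exact ho₁.add ho₂

end Aux

/-- **Duhamel formula for the derivative of a matrix exponential.**  If `Ω : ℝ → Mₙ(ℂ)` is
continuously differentiable, then `t ↦ exp(Ω(t))` is differentiable and
`exp(−Ω(t)) · (d/dt exp(Ω(t))) = ∫₀¹ exp(−sΩ(t)) · Ω′(t) · exp(sΩ(t)) ds` for every `t`. -/
theorem deriv_matrix_exp_duhamel
    (n : ℕ) (Ω : ℝ → Matrix (Fin n) (Fin n) ℂ) (hΩ : ContDiff ℝ 1 Ω) (t : ℝ) :
    DifferentiableAt ℝ (fun s => NormedSpace.exp (Ω s)) t ∧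
    NormedSpace.exp (-Ω t) * deriv (fun s => NormedSpace.exp (Ω s)) t =
      ∫ s in (0:ℝ)..1,
        NormedSpace.exp (-(s • Ω t)) * deriv Ω t * NormedSpace.exp (s • Ω t) := by
  have hc : Continuous Ω := hΩ.continuous
  have hd : HasDerivAt Ω (deriv Ω t) t := ((hΩ.differentiable one_ne_zero) t).hasDerivAt
  have H := duhamel_hasDerivAt Ω hc hd
  refine ⟨H.differentiableAt, ?_⟩
  rw [show deriv (fun s => NormedSpace.exp (Ω s)) t = _ from H.deriv]
  have hint := (duhamel_cont (𝔸 := Matrix (Fin n) (Fin n) ℂ) (fun _ => Ω t)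
    continuous_const (deriv Ω t) (Ω t)).intervalIntegrable (μ := volume) 0 1
  have hpt : ∀ s : ℝ, NormedSpace.exp (-Ω t) *
      (NormedSpace.exp (s • Ω t) * deriv Ω t * NormedSpace.exp ((1 - s) • Ω t))
      = NormedSpace.exp (-((1 - s) • Ω t)) * deriv Ω t * NormedSpace.exp ((1 - s) • Ω t) := by
    intro s
    have hcm : Commute (-Ω t) (s • Ω t) := ((Commute.refl (Ω t)).neg_left).smul_right s
    have hmul : NormedSpace.exp (-Ω t) * NormedSpace.exp (s • Ω t)
        = NormedSpace.exp (-((1 - s) • Ω t)) := by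
      erw [← NormedSpace.exp_add_of_commute hcm]
      congr 1
      rw [sub_smul, one_smul]
      abel
    rw [← hmul]; noncomm_ring
  have e1 := ContinuousLinearMap.intervalIntegral_comp_comm
    (ContinuousLinearMap.mul ℝ (Matrix (Fin n) (Fin n) ℂ) (NormedSpace.exp (-Ω t))) hint
  simp only [ContinuousLinearMap.mul_apply'] at e1
  rw [← e1]
  refine (intervalIntegral.integral_congr (fun s _ => hpt s)).trans ?_
  have hsub := intervalIntegral.integral_comp_sub_left (a := (0:ℝ)) (b := 1)
    (fun y : ℝ => NormedSpace.exp (-(y • Ω t)) * deriv Ω t * NormedSpace.exp (y • Ω t)) 1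
  norm_num at hsub
  exact hsub
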